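/- Let K be a finite extension of ℚ_p and V a bounded element of Gr^alg(K). If V is integral (‖v_i‖ ≤ 1 for all sufficiently large i in the standard basis), then the Maya diagram M(V^red) of the reduction is a Maya diagram with the same index as V, and κ(V) ≤ κ(V^red) in the componentwise order on partitions. -/

import Mathlib

/- **Statement 8.**  `K` is a finite extension of `ℚ_p`, abstracted as a
nontrivially normed field with ultrametric norm whose value group is discrete
(hypothesis `hdisc`).  We model the paper's `K((T))` by
`LaurentSeries K = HahnSeries ℤ K` via `T ↦ t⁻¹` (the paper's coefficient of
`T^m` is `coeff (-m)`, the paper degree is `-(order)`, and the paper's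
`T^n K[[T]]` is the set of series supported in `ℤ_{≥ -n}`). -/

/-- The ring of integers `O_K = {x : ‖x‖ ≤ 1}`. -/
def intRing (K : Type*) [NormedField K] [IsUltrametricDist K] : Subring K where
  carrier := {x | ‖x‖ ≤ 1}
  mul_mem' := fun {a b} ha hb => by
    simpa using mul_le_one₀ ha (norm_nonneg b) hb
  one_mem' := by simp
  add_mem' := fun {a b} ha hb =>
    le_trans (IsUltrametricDist.norm_add_le_max a b) (max_le ha hb)
  zero_mem' := by simp
  neg_mem' := fun {a} ha => by simpa using ha

/-- The maximal ideal `M_K = {x : ‖x‖ < 1}` of `O_K`. -/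
def maxIdeal (K : Type*) [NormedField K] [IsUltrametricDist K] :
    Ideal (intRing K) where
  carrier := {x | ‖(x : K)‖ < 1}
  add_mem' := fun {a b} ha hb =>
    lt_of_le_of_lt (IsUltrametricDist.norm_add_le_max (a : K) (b : K)) (max_lt ha hb)
  zero_mem' := by simp
  smul_mem' := fun c x hx => by
    show ‖((c • x : intRing K) : K)‖ < 1
    have hcx : ((c • x : intRing K) : K) = (c : K) * (x : K) := rfl
    rw [hcx, norm_mul]
    calc ‖(c : K)‖ * ‖(x : K)‖ ≤ 1 * ‖(x : K)‖ :=
          mul_le_mul_of_nonneg_right c.2 (norm_nonneg _)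
      _ = ‖(x : K)‖ := one_mul _
      _ < 1 := hx

/-- The residue field `𝔽 = O_K / M_K`. -/
def ResidueF (K : Type*) [NormedField K] [IsUltrametricDist K] : Type _ :=
  intRing K ⧸ maxIdeal K

noncomputable instance (K : Type*) [NormedField K] [IsUltrametricDist K] :
    CommRing (ResidueF K) :=
  inferInstanceAs (CommRing (intRing K ⧸ maxIdeal K))

open Classical in
/-- Reduction `O_K → 𝔽`, extended by `0` outside `O_K`. -/
noncomputable def residue (K : Type*) [NormedField K] [IsUltrametricDist K]
    (x : K) : ResidueF K :=
  if h : ‖x‖ ≤ 1 then Ideal.Quotient.mk (maxIdeal K) ⟨x, h⟩ else 0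

/-- `M(V)` for a subspace `V ⊆ K((T))`: the set of paper degrees `-(order v)`
of nonzero elements. -/
def degSet {K : Type*} [Field K] (V : Submodule K (LaurentSeries K)) : Set ℤ :=
  {d | ∃ v ∈ V, v ≠ 0 ∧ -(v.order) = d}

/-- `M(S)` for a set `S` of Laurent series over the residue field. -/
def degSetRed {K : Type*} [NormedField K] [IsUltrametricDist K]
    (S : Set (LaurentSeries (ResidueF K))) : Set ℤ :=
  {d | ∃ v ∈ S, v ≠ 0 ∧ -(v.order) = d}

/-- A Maya diagram. -/
def IsMaya (M : Set ℤ) : Prop :=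
  (M ∩ Set.Iic 0).Finite ∧ (Set.Ioi 0 \ M).Finite

/-- The reduction `V^red ⊆ 𝔽((T))` of `V`: coefficientwise reductions of the
elements of `O(V) = {v ∈ V : ‖v‖ ≤ 1}` (sup norm on coefficients). -/
def Vred {K : Type*} [NormedField K] [IsUltrametricDist K] [CompleteSpace K]
    (V : Submodule K (LaurentSeries K)) : Set (LaurentSeries (ResidueF K)) :=
  {w | ∃ v ∈ V, (∀ m : ℤ, ‖v.coeff m‖ ≤ 1) ∧ ∀ m : ℤ, w.coeff m = residue K (v.coeff m)}

/-- Index of a Maya diagram: `|M ∩ ℤ_{≤0}| − |ℤ_{>0} \ M|`. -/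
noncomputable def mayaIndex (M : Set ℤ) (h : IsMaya M) : ℤ :=
  (h.1.toFinset.card : ℤ) - (h.2.toFinset.card : ℤ)
namespace Stmt8
open HahnSeries

variable {K : Type*} [NontriviallyNormedField K] [IsUltrametricDist K]

lemma norm_add_le_max' (a b : K) : ‖a + b‖ ≤ max ‖a‖ ‖b‖ :=
  IsUltrametricDist.norm_add_le_max a b

lemma norm_sub_le_max (a b : K) : ‖a - b‖ ≤ max ‖a‖ ‖b‖ := by
  rw [sub_eq_add_neg]
  simpa using norm_add_le_max' a (-b)

lemma norm_sub_eq_of_lt {a b : K} (h : ‖b‖ < ‖a‖) : ‖a - b‖ = ‖a‖ := by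
  refine le_antisymm (le_trans (norm_sub_le_max a b) (max_le le_rfl h.le)) ?_
  have h2 : ‖a‖ ≤ max ‖a - b‖ ‖b‖ := by
    calc ‖a‖ = ‖(a - b) + b‖ := by ring_nf
    _ ≤ max ‖a - b‖ ‖b‖ := norm_add_le_max' _ _
  rcases max_cases ‖a - b‖ ‖b‖ with ⟨he, _⟩ | ⟨he, _⟩
  · rw [he] at h2; exact h2
  · rw [he] at h2; exact absurd h2 (not_le.mpr h)

lemma norm_sum_lt {ι : Type*} (t : Finset ι) (f : ι → K) {α : ℝ} (hα : 0 < α)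
    (h : ∀ i ∈ t, ‖f i‖ < α) : ‖∑ i ∈ t, f i‖ < α := by
  classical
  induction t using Finset.induction_on with
  | empty => simpa using hα
  | @insert a s hnotmem ih =>
    rw [Finset.sum_insert hnotmem]
    refine lt_of_le_of_lt (norm_add_le_max' _ _) (max_lt ?_ ?_)
    · exact h a (Finset.mem_insert_self a s)
    · exact ih fun i hi => h i (Finset.mem_insert_of_mem hi)

lemma residue_eq_zero_iff {x : K} (hx : ‖x‖ ≤ 1) : residue K x = 0 ↔ ‖x‖ < 1 := by
  have e : residue K x = Ideal.Quotient.mk (maxIdeal K) ⟨x, hx⟩ := by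
    unfold residue; exact dif_pos hx
  rw [e]
  exact Ideal.Quotient.eq_zero_iff_mem

lemma residue_zero : residue K (0 : K) = 0 := by
  have : ‖(0:K)‖ ≤ 1 := by simp
  rw [(residue_eq_zero_iff this)]
  simpa using this.trans_lt (by norm_num)

lemma residue_zero' : residue K (0 : K) = 0 := by
  rw [residue_eq_zero_iff (by simp)]; simp

variable [CompleteSpace K]

/-- coefficientwise reduction of an (integral) Laurent series -/
noncomputable def redSeries (x : LaurentSeries K) : LaurentSeries (ResidueF K) where
  coeff m := residue K (x.coeff m)
  isPWO_support' := by
    refine x.isPWO_support'.mono fun m hm => ?_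
    simp only [Function.mem_support] at hm ⊢
    intro h0
    rw [h0] at hm
    exact hm residue_zero'

@[simp] lemma redSeries_coeff (x : LaurentSeries K) (m : ℤ) :
    (redSeries x).coeff m = residue K (x.coeff m) := rfl

lemma norm_eq_one_of {x : K} (h1 : ‖x‖ ≤ 1) (h2 : ¬ ‖x‖ < 1) : ‖x‖ = 1 :=
  le_antisymm h1 (not_lt.mp h2)

lemma mem_degSetRed_iff {V : Submodule K (LaurentSeries K)} {d : ℤ} :
    d ∈ degSetRed (Vred V) ↔
      ∃ x ∈ V, (∀ m : ℤ, ‖x.coeff m‖ ≤ 1) ∧ ‖x.coeff (-d)‖ = 1 ∧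
        ∀ m : ℤ, d < m → ‖x.coeff (-m)‖ < 1 := by
  constructor
  · rintro ⟨w, ⟨x, hxV, hxint, hco⟩, hw0, hord⟩
    have horder : w.order = -d := by rw [← hord]; ring
    refine ⟨x, hxV, hxint, ?_, ?_⟩
    · have h1 : w.coeff (-d) ≠ 0 := by
        rw [← horder]; exact (mt coeff_order_eq_zero.mp hw0)
      rw [hco] at h1
      exact norm_eq_one_of (hxint _) (fun hlt => h1 ((residue_eq_zero_iff (hxint _)).mpr hlt))
    · intro m hm
      have h0 : w.coeff (-m) = 0 := by
        apply coeff_eq_zero_of_lt_order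
        rw [horder]; omega
      rw [hco] at h0
      exact (residue_eq_zero_iff (hxint _)).mp h0
  · rintro ⟨x, hxV, hxint, hlead, hhigh⟩
    set w := redSeries x with hw
    have hcd : w.coeff (-d) ≠ 0 := by
      rw [hw, redSeries_coeff]
      intro h0
      rw [residue_eq_zero_iff (hxint _)] at h0
      rw [hlead] at h0; exact absurd h0 (by norm_num)
    have hw0 : w ≠ 0 := fun h => hcd (by rw [h]; simp)
    refine ⟨w, ⟨x, hxV, hxint, fun m => rfl⟩, hw0, ?_⟩
    have hle : w.order ≤ -d := order_le_of_coeff_ne_zero hcd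
    rcases lt_or_eq_of_le hle with hlt | heq
    · exfalso
      have hone : w.coeff w.order ≠ 0 := (mt coeff_order_eq_zero.mp hw0)
      have : w.coeff w.order = 0 := by
        have : w.order = -(-w.order) := by ring
        rw [this, redSeries_coeff]
        rw [residue_eq_zero_iff (hxint _)]
        exact hhigh _ (by omega)
      exact hone this
    · omega

end Stmt8
namespace Stmt8
open HahnSeries

section Main
variable {K : Type*} [NontriviallyNormedField K] [IsUltrametricDist K] [CompleteSpace K]
variable {V : Submodule K (LaurentSeries K)} {s : ℕ → ℤ} {v : ℕ → LaurentSeries K}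

omit [NontriviallyNormedField K] in
lemma neg_order_le [NormedField K] {x : LaurentSeries K} (hx : x ≠ 0) {n : ℤ}
    (h : ∀ m : ℤ, n < m → x.coeff (-m) = 0) : -x.order ≤ n := by
  by_contra h'
  have h1 : x.coeff x.order ≠ 0 := (mt coeff_order_eq_zero.mp hx)
  have h2 : x.coeff (-(-x.order)) = 0 := h _ (by omega)
  rw [neg_neg] at h2
  exact h1 h2

omit [NontriviallyNormedField K] in
lemma coeff_zero_of_deg_lt [NormedField K] {x : LaurentSeries K} {n m : ℤ}
    (h : -x.order ≤ n) (hm : n < m) : x.coeff (-m) = 0 :=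
  coeff_eq_zero_of_lt_order (by omega)

lemma deg_mem_range (hsM : Set.range s = degSet V) {x : LaurentSeries K}
    (hxV : x ∈ V) (hx : x ≠ 0) : ∃ j, s j = -x.order := by
  have : -x.order ∈ degSet V := ⟨x, hxV, hx, rfl⟩
  rw [← hsM] at this
  exact this

/-- The submodule of series with paper-degree ≤ n (supported in exponents ≥ -n). -/
def Fle (K : Type*) [NormedField K] (n : ℤ) : Submodule K (LaurentSeries K) where
  carrier := {x | ∀ m : ℤ, n < m → x.coeff (-m) = 0}
  add_mem' := fun {a b} ha hb m hm => by rw [HahnSeries.coeff_add, ha m hm, hb m hm, add_zero]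
  zero_mem' := fun m _ => rfl
  smul_mem' := fun c x hx m hm => by rw [HahnSeries.coeff_smul, hx m hm, smul_zero]

/-- Triangular elimination: anything in `V` of degree ≤ n lies in the span of the
basis vectors of degree ≤ n. -/
lemma mem_span_basis (hs : StrictMono s) (hsM : Set.range s = degSet V)
    (hvV : ∀ i, v i ∈ V) (hmonic : ∀ i, (v i).coeff (-(s i)) = 1)
    (hdeg : ∀ i, ∀ m : ℤ, s i < m → (v i).coeff (-m) = 0) {n : ℤ} :
    ∀ x ∈ V, (∀ m : ℤ, n < m → x.coeff (-m) = 0) →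
      x ∈ Submodule.span K (v '' {i | s i ≤ n}) := by
  have key : ∀ j : ℕ, ∀ x ∈ V, x ≠ 0 → s j = -x.order → s j ≤ n →
      x ∈ Submodule.span K (v '' {i | s i ≤ n}) := by
    intro j
    induction j using Nat.strong_induction_on with
    | _ j IH =>
      intro x hxV hx0 hdegx hjn
      set c := x.coeff (-(s j)) with hc
      set x' := x - c • v j with hx'
      have hx'V : x' ∈ V := Submodule.sub_mem V hxV (Submodule.smul_mem V c (hvV j))
      have hvj : v j ∈ Submodule.span K (v '' {i | s i ≤ n}) :=
        Submodule.subset_span ⟨j, hjn, rfl⟩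
      have hxx' : x = x' + c • v j := by rw [hx']; ring
      have hcoeff : ∀ m : ℤ, s j ≤ m → x'.coeff (-m) = 0 := by
        intro m hm
        rcases lt_or_eq_of_le hm with hlt | heq
        · rw [hx', HahnSeries.coeff_sub, HahnSeries.coeff_smul, hdeg j m hlt, smul_zero, sub_zero]
          exact coeff_zero_of_deg_lt (by omega) hlt
        · rw [hx', HahnSeries.coeff_sub, HahnSeries.coeff_smul, ← heq, hmonic j, smul_eq_mul, mul_one, hc, sub_self]
      by_cases hx'0 : x' = 0
      · rw [hxx', hx'0, zero_add]
        exact Submodule.smul_mem _ _ hvj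
      · obtain ⟨j', hj'⟩ := deg_mem_range hsM hx'V hx'0
        have hord : -x'.order < s j := by
          have := neg_order_le hx'0 (n := s j - 1) (fun m hm => hcoeff m (by omega))
          omega
        have hj'j : j' < j := by
          have : s j' < s j := by omega
          exact hs.lt_iff_lt.mp this
        have := IH j' hj'j x' hx'V hx'0 hj' (by omega)
        rw [hxx']
        exact Submodule.add_mem _ this (Submodule.smul_mem _ _ hvj)
  intro x hxV hsupp
  by_cases hx0 : x = 0
  · rw [hx0]; exact Submodule.zero_mem _
  · obtain ⟨j, hj⟩ := deg_mem_range hsM hxV hx0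
    exact key j x hxV hx0 hj (by have := neg_order_le hx0 hsupp; omega)

end Main
end Stmt8
namespace Stmt8
open HahnSeries

section Main2
variable {K : Type*} [NontriviallyNormedField K] [IsUltrametricDist K] [CompleteSpace K]
variable {V : Submodule K (LaurentSeries K)} {s : ℕ → ℤ} {v : ℕ → LaurentSeries K}
variable {π : K}

lemma norm_one_of_between (hπ0 : 0 < ‖π‖) (hπ1 : ‖π‖ < 1)
    (hval : ∀ x : K, x ≠ 0 → ∃ n : ℤ, ‖x‖ = ‖π‖ ^ n)
    {c : K} (h1 : ‖c‖ ≤ 1) (h2 : ‖π‖ < ‖c‖) : ‖c‖ = 1 := by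
  have hc0 : c ≠ 0 := by
    intro h; rw [h, norm_zero] at h2; linarith
  obtain ⟨e, he⟩ := hval c hc0
  rw [he] at h1 h2 ⊢
  have he0 : 0 ≤ e := by
    by_contra h'
    push_neg at h'
    have : (1:ℝ) < ‖π‖ ^ e := one_lt_zpow_of_neg₀ hπ0 hπ1 (by omega)
    linarith
  have he1 : e < 1 := by
    by_contra h'
    push_neg at h'
    have : ‖π‖ ^ e ≤ ‖π‖ ^ (1:ℤ) := zpow_le_zpow_right_of_le_one₀ hπ0 hπ1.le h'
    rw [zpow_one] at this
    linarith
  have : e = 0 := by omega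
  rw [this, zpow_zero]

lemma norm_le_pi_of_lt_one (hπ0 : 0 < ‖π‖) (hπ1 : ‖π‖ < 1)
    (hval : ∀ x : K, x ≠ 0 → ∃ n : ℤ, ‖x‖ = ‖π‖ ^ n)
    {c : K} (h1 : ‖c‖ < 1) : ‖c‖ ≤ ‖π‖ := by
  by_contra h'
  push_neg at h'
  have := norm_one_of_between hπ0 hπ1 hval h1.le h'
  linarith

lemma s_mem_red (hvV : ∀ i, v i ∈ V) (hmonic : ∀ i, (v i).coeff (-(s i)) = 1)
    (hdeg : ∀ i, ∀ m : ℤ, s i < m → (v i).coeff (-m) = 0)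
    {N : ℕ} (hN : ∀ i, N ≤ i → ∀ m : ℤ, ‖(v i).coeff m‖ ≤ 1)
    {i : ℕ} (hi : N ≤ i) : s i ∈ degSetRed (Vred V) := by
  rw [mem_degSetRed_iff]
  refine ⟨v i, hvV i, hN i hi, ?_, ?_⟩
  · rw [hmonic i, norm_one]
  · intro m hm
    rw [hdeg i m hm, norm_zero]
    norm_num

lemma exists_rmax {n : ℤ} {z : LaurentSeries K} (hz : ∃ j : ℤ, ‖z.coeff j‖ = 1)
    (hzsupp : ∀ m : ℤ, n < m → z.coeff (-m) = 0) :
    ∃ r : ℤ, r ≤ n ∧ ‖z.coeff (-r)‖ = 1 ∧ ∀ m : ℤ, r < m → ‖z.coeff (-m)‖ ≠ 1 := by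
  obtain ⟨j, hj⟩ := hz
  have hbdd : ∀ m : ℤ, ‖z.coeff (-m)‖ = 1 → m ≤ n := by
    intro m hm
    by_contra h'
    push_neg at h'
    rw [hzsupp m h', norm_zero] at hm
    norm_num at hm
  obtain ⟨r, hr1, hr2⟩ := Int.exists_greatest_of_bdd (P := fun m => ‖z.coeff (-m)‖ = 1)
    ⟨n, fun m hm => hbdd m hm⟩ ⟨-j, by simpa using hj⟩
  refine ⟨r, hbdd r hr1, hr1, fun m hm h1 => ?_⟩
  have := hr2 m h1
  omega

/-- Degree reduction: every element of the reduced Maya diagram below `n ≥ s N`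
has an integral representative of degree ≤ n. -/
lemma exists_rep (hs : StrictMono s) (hsM : Set.range s = degSet V)
    (hvV : ∀ i, v i ∈ V) (hmonic : ∀ i, (v i).coeff (-(s i)) = 1)
    (hdeg : ∀ i, ∀ m : ℤ, s i < m → (v i).coeff (-m) = 0)
    {N : ℕ} (hN : ∀ i, N ≤ i → ∀ m : ℤ, ‖(v i).coeff m‖ ≤ 1)
    {d n : ℤ} (hd : d ∈ degSetRed (Vred V)) (hn : s N ≤ n) (hdn : d ≤ n) :
    ∃ x ∈ V, (∀ m : ℤ, ‖x.coeff m‖ ≤ 1) ∧ ‖x.coeff (-d)‖ = 1 ∧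
      (∀ m : ℤ, d < m → ‖x.coeff (-m)‖ < 1) ∧ (∀ m : ℤ, n < m → x.coeff (-m) = 0) := by
  rw [mem_degSetRed_iff] at hd
  obtain ⟨x0, hx0V, hx0int, hx0lead, hx0high⟩ := hd
  have key : ∀ k : ℕ, ∀ x : LaurentSeries K, x ∈ V → (∀ m : ℤ, ‖x.coeff m‖ ≤ 1) →
      ‖x.coeff (-d)‖ = 1 → (∀ m : ℤ, d < m → ‖x.coeff (-m)‖ < 1) →
      (-x.order - n).toNat ≤ k →
      ∃ x' ∈ V, (∀ m : ℤ, ‖x'.coeff m‖ ≤ 1) ∧ ‖x'.coeff (-d)‖ = 1 ∧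
        (∀ m : ℤ, d < m → ‖x'.coeff (-m)‖ < 1) ∧ (∀ m : ℤ, n < m → x'.coeff (-m) = 0) := by
    intro k
    induction k using Nat.strong_induction_on with
    | _ k IH =>
      intro x hxV hxint hxlead hxhigh hmeas
      have hx0 : x ≠ 0 := by
        intro h
        rw [h] at hxlead
        simp at hxlead
      by_cases hsupp : ∀ m : ℤ, n < m → x.coeff (-m) = 0
      · exact ⟨x, hxV, hxint, hxlead, hxhigh, hsupp⟩
      · push_neg at hsupp
        obtain ⟨m0, hm0n, hm0⟩ := hsupp
        have hdegx : n < -x.order := by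
          have := order_le_of_coeff_ne_zero hm0
          omega
        obtain ⟨J, hJ⟩ := deg_mem_range hsM hxV hx0
        have hNJ : N ≤ J := by
          have : s N < s J := by omega
          exact le_of_lt (hs.lt_iff_lt.mp this)
        set c := x.coeff (-(s J)) with hc
        have hcnorm : ‖c‖ < 1 := hxhigh (s J) (by omega)
        set x' := x - c • v J with hx'
        have hx'V : x' ∈ V := Submodule.sub_mem V hxV (Submodule.smul_mem V c (hvV J))
        have hx'int : ∀ m : ℤ, ‖x'.coeff m‖ ≤ 1 := by
          intro m
          rw [hx', HahnSeries.coeff_sub, HahnSeries.coeff_smul, smul_eq_mul]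
          refine le_trans (norm_sub_le_max _ _) (max_le (hxint m) ?_)
          rw [norm_mul]
          exact mul_le_one₀ hcnorm.le (norm_nonneg _) (hN J hNJ m)
        have hx'lead : ‖x'.coeff (-d)‖ = 1 := by
          rw [hx', HahnSeries.coeff_sub, HahnSeries.coeff_smul, smul_eq_mul]
          rw [norm_sub_eq_of_lt, hxlead]
          rw [hxlead, norm_mul]
          calc ‖c‖ * ‖(v J).coeff (-d)‖ ≤ ‖c‖ * 1 :=
                mul_le_mul_of_nonneg_left (hN J hNJ _) (norm_nonneg c)
          _ = ‖c‖ := mul_one _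
          _ < 1 := hcnorm
        have hx'high : ∀ m : ℤ, d < m → ‖x'.coeff (-m)‖ < 1 := by
          intro m hm
          rw [hx', HahnSeries.coeff_sub, HahnSeries.coeff_smul, smul_eq_mul]
          refine lt_of_le_of_lt (norm_sub_le_max _ _) (max_lt (hxhigh m hm) ?_)
          rw [norm_mul]
          calc ‖c‖ * ‖(v J).coeff (-m)‖ ≤ ‖c‖ * 1 :=
                mul_le_mul_of_nonneg_left (hN J hNJ _) (norm_nonneg c)
          _ = ‖c‖ := mul_one _
          _ < 1 := hcnorm
        have hx'zero : ∀ m : ℤ, s J ≤ m → x'.coeff (-m) = 0 := by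
          intro m hm
          rcases lt_or_eq_of_le hm with hlt | heq
          · rw [hx', HahnSeries.coeff_sub, HahnSeries.coeff_smul, hdeg J m hlt, smul_zero, sub_zero]
            exact coeff_zero_of_deg_lt (by omega) hlt
          · rw [hx', HahnSeries.coeff_sub, HahnSeries.coeff_smul, ← heq, hmonic J, smul_eq_mul, mul_one, hc, sub_self]
        have hx'0 : x' ≠ 0 := by
          intro h
          rw [h] at hx'lead
          simp at hx'lead
        have hordx' : -x'.order < s J :=  by
          have := neg_order_le hx'0 (n := s J - 1) (fun m hm => hx'zero m (by omega))
          omega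
        exact IH (-x'.order - n).toNat (by omega) x' hx'V hx'int hx'lead hx'high le_rfl
  exact key (-x0.order - n).toNat x0 hx0V hx0int hx0lead hx0high le_rfl

end Main2
end Stmt8
namespace Stmt8
open HahnSeries

section Main3
variable {K : Type*} [NontriviallyNormedField K] [IsUltrametricDist K] [CompleteSpace K]
variable {V : Submodule K (LaurentSeries K)} {s : ℕ → ℤ} {v : ℕ → LaurentSeries K}

/-- key ultrametric triangularity: a nontrivial combination of reduced representatives
has a nonzero coefficient at the top maximal-coefficient degree. -/
lemma rep_sum_coeff (D : Finset ℤ) (w : ℤ → LaurentSeries K)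
    (hw : ∀ d ∈ D, (∀ m : ℤ, ‖(w d).coeff m‖ ≤ 1) ∧ ‖(w d).coeff (-d)‖ = 1 ∧
      ∀ m : ℤ, d < m → ‖(w d).coeff (-m)‖ < 1)
    (a : ℤ → K) (ha : ∃ d ∈ D, a d ≠ 0) :
    ∃ dstar ∈ D, a dstar ≠ 0 ∧ (∑ d ∈ D, a d • w d).coeff (-dstar) ≠ 0 := by
  classical
  obtain ⟨d0, hd0D, hd0⟩ := ha
  have hDne : D.Nonempty := ⟨d0, hd0D⟩
  set α := (D.image fun d => ‖a d‖).max' (hDne.image _) with hα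
  have hmem : α ∈ D.image fun d => ‖a d‖ := Finset.max'_mem _ _
  have hle : ∀ d ∈ D, ‖a d‖ ≤ α := by
    intro d hd
    rw [hα]
    exact Finset.le_max' (D.image fun d => ‖a d‖) (‖a d‖) (Finset.mem_image_of_mem _ hd)
  have hαpos : 0 < α := lt_of_lt_of_le (norm_pos_iff.mpr hd0) (hle d0 hd0D)
  set F := D.filter (fun d => ‖a d‖ = α) with hF
  have hFne : F.Nonempty := by
    obtain ⟨d1, hd1D, hd1⟩ := Finset.mem_image.mp hmem
    exact ⟨d1, Finset.mem_filter.mpr ⟨hd1D, hd1⟩⟩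
  set dstar := F.max' hFne with hds
  have hdsF : dstar ∈ F := Finset.max'_mem _ _
  have hdsD : dstar ∈ D := (Finset.mem_filter.mp hdsF).1
  have hdsα : ‖a dstar‖ = α := (Finset.mem_filter.mp hdsF).2
  refine ⟨dstar, hdsD, by
      intro h; rw [h, norm_zero] at hdsα; exact absurd hdsα.symm (ne_of_gt hαpos), ?_⟩
  have hsumco : (∑ d ∈ D, a d • w d).coeff (-dstar) = ∑ d ∈ D, a d * (w d).coeff (-dstar) := by
    rw [show ((∑ d ∈ D, a d • w d).coeff (-dstar))
        = coeff.addMonoidHom (-dstar) (∑ d ∈ D, a d • w d) from rfl, map_sum]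
    exact Finset.sum_congr rfl fun d _ => by
      show (a d • w d).coeff (-dstar) = _
      rw [HahnSeries.coeff_smul, smul_eq_mul]
  rw [hsumco, ← Finset.add_sum_erase D _ hdsD]
  have hmain : ‖a dstar * (w dstar).coeff (-dstar)‖ = α := by
    rw [norm_mul, (hw dstar hdsD).2.1, mul_one, hdsα]
  have hrest : ‖∑ d ∈ D.erase dstar, a d * (w d).coeff (-dstar)‖ < α := by
    refine norm_sum_lt _ _ hαpos ?_
    intro d hd
    have hdD : d ∈ D := Finset.mem_of_mem_erase hd
    have hdne : d ≠ dstar := Finset.ne_of_mem_erase hd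
    rw [norm_mul]
    by_cases hda : ‖a d‖ = α
    · have hdF : d ∈ F := Finset.mem_filter.mpr ⟨hdD, hda⟩
      have : d < dstar := lt_of_le_of_ne (Finset.le_max' _ _ hdF) hdne
      calc ‖a d‖ * ‖(w d).coeff (-dstar)‖ < ‖a d‖ * 1 := by
            apply mul_lt_mul_of_pos_left ((hw d hdD).2.2 dstar this) (by rw [hda]; exact hαpos)
      _ = α := by rw [mul_one, hda]
    · have : ‖a d‖ < α := lt_of_le_of_ne (hle d hdD) hda
      calc ‖a d‖ * ‖(w d).coeff (-dstar)‖ ≤ ‖a d‖ * 1 :=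
            mul_le_mul_of_nonneg_left ((hw d hdD).1 _) (norm_nonneg _)
      _ = ‖a d‖ := mul_one _
      _ < α := this
  intro h0
  have : ‖a dstar * (w dstar).coeff (-dstar) + ∑ d ∈ D.erase dstar, a d * (w d).coeff (-dstar)‖ = α := by
    rw [show a dstar * (w dstar).coeff (-dstar) + ∑ d ∈ D.erase dstar, a d * (w d).coeff (-dstar)
        = a dstar * (w dstar).coeff (-dstar) - (- ∑ d ∈ D.erase dstar, a d * (w d).coeff (-dstar)) by ring]
    rw [norm_sub_eq_of_lt (by rwa [norm_neg, hmain]), hmain]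
  rw [h0, norm_zero] at this
  exact absurd this.symm (ne_of_gt hαpos)

/-- Finite set of indices `i` with `s i ≤ n`. -/
def Jfin (s : ℕ → ℤ) (n : ℤ) : Finset ℕ :=
  (Finset.range ((n - s 0).toNat + 1)).filter (fun i => s i ≤ n)

lemma s_lower (hs : StrictMono s) : ∀ i : ℕ, s 0 + (i : ℤ) ≤ s i := by
  intro i
  induction i with
  | zero => simp
  | succ k ih =>
    have := hs (by omega : k < k + 1)
    push_cast
    push_cast at ih
    omega

lemma mem_Jfin (hs : StrictMono s) {n : ℤ} {i : ℕ} : i ∈ Jfin s n ↔ s i ≤ n := by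
  constructor
  · intro h; exact (Finset.mem_filter.mp h).2
  · intro h
    refine Finset.mem_filter.mpr ⟨Finset.mem_range.mpr ?_, h⟩
    have := s_lower hs i
    omega

lemma card_le_of_subset (hs : StrictMono s) (hsM : Set.range s = degSet V)
    (hvV : ∀ i, v i ∈ V) (hmonic : ∀ i, (v i).coeff (-(s i)) = 1)
    (hdeg : ∀ i, ∀ m : ℤ, s i < m → (v i).coeff (-m) = 0)
    {N : ℕ} (hN : ∀ i, N ≤ i → ∀ m : ℤ, ‖(v i).coeff m‖ ≤ 1)
    {n : ℤ} (hn : s N ≤ n) (D : Finset ℤ)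
    (hD : ∀ d ∈ D, d ∈ degSetRed (Vred V) ∧ d ≤ n) :
    D.card ≤ (Jfin s n).card := by
  classical
  have hrep : ∀ d, d ∈ D → ∃ x, x ∈ V ∧ (∀ m : ℤ, ‖x.coeff m‖ ≤ 1) ∧ ‖x.coeff (-d)‖ = 1 ∧
      (∀ m : ℤ, d < m → ‖x.coeff (-m)‖ < 1) ∧ (∀ m : ℤ, n < m → x.coeff (-m) = 0) := by
    intro d hd
    obtain ⟨x, hx1, hx2⟩ := exists_rep hs hsM hvV hmonic hdeg hN (hD d hd).1 hn (hD d hd).2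
    exact ⟨x, hx1, hx2⟩
  choose! w hw using hrep
  -- linear independence of the representatives
  have hli : LinearIndependent K (fun d : ↥D => w ↑d) := by
    rw [Fintype.linearIndependent_iff]
    intro g hg
    by_contra hcon
    push_neg at hcon
    obtain ⟨i0, hi0⟩ := hcon
    set a : ℤ → K := fun d => if h : d ∈ D then g ⟨d, h⟩ else 0 with haa
    have hconv : ∑ i : ↥D, g i • w ↑i = ∑ d ∈ D, a d • w d := by
      rw [Finset.univ_eq_attach, ← Finset.sum_attach D (fun d => a d • w d)]
      exact Finset.sum_congr rfl fun i _ => by rw [haa]; simp [i.2]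
    have hane : ∃ d ∈ D, a d ≠ 0 := ⟨↑i0, i0.2, by rw [haa]; simpa [i0.2] using hi0⟩
    obtain ⟨ds, hdsD, _, hne⟩ := rep_sum_coeff D w
      (fun d hd => ⟨(hw d hd).2.1, (hw d hd).2.2.1, (hw d hd).2.2.2.1⟩) a hane
    rw [← hconv, hg] at hne
    simp at hne
  -- all representatives lie in the span of the basis vectors of degree ≤ n
  have hsub : Submodule.span K (Set.range (fun d : ↥D => w ↑d)) ≤
      Submodule.span K (v '' {i | s i ≤ n}) := by
    rw [Submodule.span_le]
    rintro - ⟨d, rfl⟩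
    exact mem_span_basis hs hsM hvV hmonic hdeg (w ↑d) (hw ↑d d.2).1 (hw ↑d d.2).2.2.2.2
  have himgeq : v '' {i | s i ≤ n} = ↑((Jfin s n).image v) := by
    rw [Finset.coe_image]
    congr 1
    ext i
    simp [mem_Jfin hs]
  have hfd : FiniteDimensional K ↥(Submodule.span K (v '' {i | s i ≤ n})) := by
    rw [himgeq]
    exact FiniteDimensional.span_of_finite K (Finset.finite_toSet _)
  calc D.card = Fintype.card ↥D := (Fintype.card_coe D).symm
  _ = Module.finrank K ↥(Submodule.span K (Set.range (fun d : ↥D => w ↑d))) :=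
      (finrank_span_eq_card hli).symm
  _ ≤ Module.finrank K ↥(Submodule.span K (v '' {i | s i ≤ n})) :=
      Submodule.finrank_mono hsub
  _ ≤ (Jfin s n).card := by
      rw [himgeq]
      exact le_trans (finrank_span_finset_le_card _) (Finset.card_image_le)

end Main3
end Stmt8
namespace Stmt8
open HahnSeries

section Main3b
variable {K : Type*} [NontriviallyNormedField K] [IsUltrametricDist K] [CompleteSpace K]
variable {V : Submodule K (LaurentSeries K)} {s : ℕ → ℤ} {v : ℕ → LaurentSeries K}

lemma coeff_sum {ι : Type*} (t : Finset ι) (f : ι → LaurentSeries K) (m : ℤ) :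
    (∑ i ∈ t, f i).coeff m = ∑ i ∈ t, (f i).coeff m := by
  rw [show ((∑ i ∈ t, f i).coeff m) = coeff.addMonoidHom m (∑ i ∈ t, f i) from rfl, map_sum]
  rfl

lemma rep_linearIndependent (D : Finset ℤ) (w : ℤ → LaurentSeries K)
    (hw : ∀ d ∈ D, (∀ m : ℤ, ‖(w d).coeff m‖ ≤ 1) ∧ ‖(w d).coeff (-d)‖ = 1 ∧
      ∀ m : ℤ, d < m → ‖(w d).coeff (-m)‖ < 1) :
    LinearIndependent K (fun d : ↥D => w ↑d) := by
  classical
  rw [Fintype.linearIndependent_iff]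
  intro g hg
  by_contra hcon
  push_neg at hcon
  obtain ⟨i0, hi0⟩ := hcon
  set a : ℤ → K := fun d => if h : d ∈ D then g ⟨d, h⟩ else 0 with haa
  have hconv : ∑ i : ↥D, g i • w ↑i = ∑ d ∈ D, a d • w d := by
    rw [Finset.univ_eq_attach, ← Finset.sum_attach D (fun d => a d • w d)]
    exact Finset.sum_congr rfl fun i _ => by rw [haa]; simp [i.2]
  have hane : ∃ d ∈ D, a d ≠ 0 := ⟨↑i0, i0.2, by rw [haa]; simpa [i0.2] using hi0⟩
  obtain ⟨ds, hdsD, _, hne⟩ := rep_sum_coeff D w hw a hane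
  rw [← hconv, hg] at hne
  simp at hne

lemma red_inter_finite (hs : StrictMono s) (hsM : Set.range s = degSet V)
    (hvV : ∀ i, v i ∈ V) (hmonic : ∀ i, (v i).coeff (-(s i)) = 1)
    (hdeg : ∀ i, ∀ m : ℤ, s i < m → (v i).coeff (-m) = 0)
    {N : ℕ} (hN : ∀ i, N ≤ i → ∀ m : ℤ, ‖(v i).coeff m‖ ≤ 1)
    {n : ℤ} (hn : s N ≤ n) :
    (degSetRed (Vred V) ∩ Set.Iic n).Finite := by
  by_contra hinf
  obtain ⟨t, ht, hcard⟩ := Set.Infinite.exists_subset_card_eq hinf ((Jfin s n).card + 1)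
  have := card_le_of_subset hs hsM hvV hmonic hdeg hN hn t
    (fun d hd => by
      obtain ⟨h1, h2⟩ := ht hd
      exact ⟨h1, h2⟩)
  omega

end Main3b
end Stmt8
namespace Stmt8
open HahnSeries
set_option synthInstance.maxHeartbeats 1000000
set_option maxHeartbeats 2000000

section Main4
variable {K : Type*} [NontriviallyNormedField K] [IsUltrametricDist K] [CompleteSpace K]
variable {V : Submodule K (LaurentSeries K)} {s : ℕ → ℤ} {v : ℕ → LaurentSeries K}
variable {π : K}

/-- linear independence of the standard basis vectors. -/
lemma v_linearIndependent (hs : StrictMono s)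
    (hmonic : ∀ i, (v i).coeff (-(s i)) = 1)
    (hdeg : ∀ i, ∀ m : ℤ, s i < m → (v i).coeff (-m) = 0)
    {n : ℤ} : LinearIndependent K (fun i : ↥(Jfin s n) => v ↑i) := by
  classical
  rw [Fintype.linearIndependent_iff]
  intro g hg
  by_contra hcon
  push_neg at hcon
  obtain ⟨i1, hi1⟩ := hcon
  set F := Finset.univ.filter (fun i : ↥(Jfin s n) => g i ≠ 0) with hF
  have hFne : F.Nonempty := ⟨i1, by simp [hF, hi1]⟩
  set istar := F.max' hFne with histar
  have histarF : istar ∈ F := Finset.max'_mem _ _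
  have hgstar : g istar ≠ 0 := by
    have := (Finset.mem_filter.mp histarF).2
    simpa using this
  have hco : (∑ i : ↥(Jfin s n), g i • v ↑i).coeff (-(s ↑istar)) = g istar := by
    rw [coeff_sum]
    have hterm : ∀ i : ↥(Jfin s n), (g i • v ↑i).coeff (-(s ↑istar)) = g i * (v ↑i).coeff (-(s ↑istar)) :=
      fun i => by rw [HahnSeries.coeff_smul, smul_eq_mul]
    rw [Finset.sum_congr rfl (fun i _ => hterm i)]
    rw [Finset.sum_eq_single_of_mem istar (Finset.mem_univ _)]
    · rw [hmonic, mul_one]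
    · intro i _ hine
      by_cases hgi : g i = 0
      · rw [hgi, zero_mul]
      · have hiF : i ∈ F := by simp [hF, hgi]
        have hile : i ≤ istar := Finset.le_max' _ _ hiF
        have hilt : (↑i : ℕ) < ↑istar := by
          rcases lt_or_eq_of_le hile with h | h
          · exact_mod_cast h
          · exact absurd h hine
        rw [hdeg ↑i (s ↑istar) (hs hilt), mul_zero]
  rw [hg] at hco
  simp at hco
  exact hgstar hco.symm

/-- The main lower bound. -/
lemma lower_bound (hs : StrictMono s) (hsM : Set.range s = degSet V)
    (hvV : ∀ i, v i ∈ V) (hmonic : ∀ i, (v i).coeff (-(s i)) = 1)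
    (hdeg : ∀ i, ∀ m : ℤ, s i < m → (v i).coeff (-m) = 0)
    (hbound : ∀ i, ∃ C : ℝ, ∀ m : ℤ, ‖(v i).coeff m‖ ≤ C)
    {N : ℕ} (hN : ∀ i, N ≤ i → ∀ m : ℤ, ‖(v i).coeff m‖ ≤ 1)
    (hπ0 : 0 < ‖π‖) (hπ1 : ‖π‖ < 1)
    (hval : ∀ x : K, x ≠ 0 → ∃ e : ℤ, ‖x‖ = ‖π‖ ^ e)
    {n n₀ : ℤ} (hn0 : s N ≤ n₀) (hnn0 : n ≤ n₀) :
    ∃ E : Finset ℤ, (∀ d ∈ E, d ∈ degSetRed (Vred V) ∧ d ≤ n) ∧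
      (Jfin s n).card ≤ E.card := by
  classical
  have hπne : π ≠ 0 := fun h => by rw [h, norm_zero] at hπ0; exact lt_irrefl _ hπ0
  have hfin : (degSetRed (Vred V) ∩ Set.Iic n₀).Finite :=
    red_inter_finite hs hsM hvV hmonic hdeg hN hn0
  set D₀ := hfin.toFinset with hD₀
  have hD₀mem : ∀ d : ℤ, d ∈ D₀ ↔ d ∈ degSetRed (Vred V) ∧ d ≤ n₀ := by
    intro d
    rw [hD₀, Set.Finite.mem_toFinset]
    rfl
  -- representatives
  have hrep : ∀ d, d ∈ D₀ → ∃ x, x ∈ V ∧ (∀ m : ℤ, ‖x.coeff m‖ ≤ 1) ∧ ‖x.coeff (-d)‖ = 1 ∧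
      (∀ m : ℤ, d < m → ‖x.coeff (-m)‖ < 1) ∧ (∀ m : ℤ, n₀ < m → x.coeff (-m) = 0) := by
    intro d hd
    obtain ⟨x, hx1, hx2⟩ := exists_rep hs hsM hvV hmonic hdeg hN
      ((hD₀mem d).mp hd).1 hn0 ((hD₀mem d).mp hd).2
    exact ⟨x, hx1, hx2⟩
  choose! w hw using hrep
  have hw' : ∀ d ∈ D₀, (∀ m : ℤ, ‖(w d).coeff m‖ ≤ 1) ∧ ‖(w d).coeff (-d)‖ = 1 ∧
      ∀ m : ℤ, d < m → ‖(w d).coeff (-m)‖ < 1 :=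
    fun d hd => ⟨(hw d hd).2.1, (hw d hd).2.2.1, (hw d hd).2.2.2.1⟩
  set W := Submodule.span K (Set.range fun d : ↥D₀ => w ↑d) with hW
  have hWV : W ≤ V := by
    rw [hW, Submodule.span_le]
    rintro - ⟨d, rfl⟩
    exact (hw ↑d d.2).1
  have hWF : W ≤ Fle K n₀ := by
    rw [hW, Submodule.span_le]
    rintro - ⟨d, rfl⟩
    exact fun m hm => (hw ↑d d.2).2.2.2.2 m hm
  have hwrW : ∀ r : ℤ, r ∈ D₀ → w r ∈ W := by
    intro r hr
    exact Submodule.subset_span ⟨⟨r, hr⟩, rfl⟩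
  -- one-step reduction
  have hstep : ∀ k : ℕ, ∀ z : LaurentSeries K, z ∈ V → (∀ m : ℤ, n₀ < m → z.coeff (-m) = 0) →
      (∀ j : ℤ, ‖z.coeff j‖ ≤ 1) →
      (∀ r : ℤ, (‖z.coeff (-r)‖ = 1 ∧ ∀ m : ℤ, r < m → ‖z.coeff (-m)‖ ≠ 1) →
        (D₀.filter (· ≤ r)).card ≤ k) →
      ∃ y ∈ W, ∀ j : ℤ, ‖(z - y).coeff j‖ ≤ ‖π‖ := by
    intro k
    induction k using Nat.strong_induction_on with
    | _ k IH =>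
      intro z hzV hzF hzint hmeas
      by_cases hsmall : ∀ j : ℤ, ‖z.coeff j‖ ≤ ‖π‖
      · exact ⟨0, W.zero_mem, fun j => by rw [sub_zero]; exact hsmall j⟩
      · push_neg at hsmall
        obtain ⟨j0, hj0⟩ := hsmall
        have hj01 : ‖z.coeff j0‖ = 1 := norm_one_of_between hπ0 hπ1 hval (hzint j0) hj0
        obtain ⟨r, hrn, hr1, hrmax⟩ := exists_rmax ⟨j0, hj01⟩ hzF
        have hrM : r ∈ degSetRed (Vred V) := by
          rw [mem_degSetRed_iff]
          exact ⟨z, hzV, hzint, hr1,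
            fun m hm => lt_of_le_of_ne (hzint _) (hrmax m hm)⟩
        have hrD : r ∈ D₀ := (hD₀mem r).mpr ⟨hrM, hrn⟩
        set b := (w r).coeff (-r) with hb
        have hbnorm : ‖b‖ = 1 := (hw r hrD).2.2.1
        have hbne : b ≠ 0 := by
          intro h; rw [h, norm_zero] at hbnorm; norm_num at hbnorm
        set c := z.coeff (-r) * b⁻¹ with hc
        have hcnorm : ‖c‖ = 1 := by
          rw [hc, norm_mul, norm_inv, hr1, hbnorm]
          norm_num
        set z' := z - c • w r with hz'
        have hz'V : z' ∈ V := Submodule.sub_mem V hzV (Submodule.smul_mem V c ((hw r hrD).1))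
        have hz'F : ∀ m : ℤ, n₀ < m → z'.coeff (-m) = 0 := by
          intro m hm
          rw [hz', HahnSeries.coeff_sub, HahnSeries.coeff_smul, hzF m hm, (hw r hrD).2.2.2.2 m hm, smul_zero, sub_zero]
        have hz'int : ∀ j : ℤ, ‖z'.coeff j‖ ≤ 1 := by
          intro j
          rw [hz', HahnSeries.coeff_sub, HahnSeries.coeff_smul, smul_eq_mul]
          refine le_trans (norm_sub_le_max _ _) (max_le (hzint j) ?_)
          rw [norm_mul, hcnorm, one_mul]
          exact (hw r hrD).2.1 j
        have hz'r : ∀ m : ℤ, r ≤ m → ‖z'.coeff (-m)‖ < 1 := by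
          intro m hm
          rcases lt_or_eq_of_le hm with hlt | heq
          · rw [hz', HahnSeries.coeff_sub, HahnSeries.coeff_smul, smul_eq_mul]
            refine lt_of_le_of_lt (norm_sub_le_max _ _) (max_lt ?_ ?_)
            · exact lt_of_le_of_ne (hzint _) (hrmax m hlt)
            · rw [norm_mul, hcnorm, one_mul]
              exact (hw r hrD).2.2.2.1 m hlt
          · have : z'.coeff (-m) = 0 := by
              rw [hz', HahnSeries.coeff_sub, HahnSeries.coeff_smul, smul_eq_mul, ← heq, hc, ← hb]
              field_simp
              simp
            rw [this, norm_zero]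
            norm_num
        by_cases hsmall' : ∀ j : ℤ, ‖z'.coeff j‖ ≤ ‖π‖
        · refine ⟨c • w r, Submodule.smul_mem W c (hwrW r hrD), fun j => ?_⟩
          have : z - c • w r = z' := by rw [hz']
          rw [this]
          exact hsmall' j
        · push_neg at hsmall'
          obtain ⟨j1, hj1⟩ := hsmall'
          have hj11 : ‖z'.coeff j1‖ = 1 := norm_one_of_between hπ0 hπ1 hval (hz'int j1) hj1
          obtain ⟨r', hr'n, hr'1, hr'max⟩ := exists_rmax ⟨j1, hj11⟩ hz'F
          have hr'r : r' < r := by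
            by_contra h
            push_neg at h
            have := hz'r r' h
            rw [hr'1] at this
            norm_num at this
          have hr'M : r' ∈ degSetRed (Vred V) := by
            rw [mem_degSetRed_iff]
            exact ⟨z', hz'V, hz'int, hr'1,
              fun m hm => lt_of_le_of_ne (hz'int _) (hr'max m hm)⟩
          have hr'D : r' ∈ D₀ := (hD₀mem r').mpr ⟨hr'M, hr'n⟩
          set k' := (D₀.filter (· ≤ r')).card with hk'
          have hkk : (D₀.filter (· ≤ r)).card ≤ k := hmeas r ⟨hr1, hrmax⟩
          have hss : D₀.filter (· ≤ r') ⊂ D₀.filter (· ≤ r) := by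
            constructor
            · intro d hd
              rw [Finset.mem_filter] at hd ⊢
              exact ⟨hd.1, by omega⟩
            · intro hsub
              have h1 : r ∈ D₀.filter (· ≤ r) := Finset.mem_filter.mpr ⟨hrD, le_refl r⟩
              have h2 := hsub h1
              rw [Finset.mem_filter] at h2
              omega
          have hk'k : k' < k := lt_of_lt_of_le (Finset.card_lt_card hss) hkk
          have hmeas' : ∀ r'' : ℤ, (‖z'.coeff (-r'')‖ = 1 ∧ ∀ m : ℤ, r'' < m → ‖z'.coeff (-m)‖ ≠ 1) →
              (D₀.filter (· ≤ r'')).card ≤ k' := by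
            intro r'' ⟨h1, h2⟩
            have : r'' = r' := by
              by_contra hne
              rcases lt_or_gt_of_ne hne with h | h
              · exact (h2 r' h) hr'1
              · exact (hr'max r'' h) h1
            rw [this]
          obtain ⟨y', hy'W, hy'⟩ := IH k' hk'k z' hz'V hz'F hz'int hmeas'
          refine ⟨y' + c • w r, Submodule.add_mem W hy'W (Submodule.smul_mem W c (hwrW r hrD)), fun j => ?_⟩
          have : z - (y' + c • w r) = z' - y' := by rw [hz']; ring
          rw [this]
          exact hy' j
  have hstep' : ∀ z : LaurentSeries K, z ∈ V → (∀ m : ℤ, n₀ < m → z.coeff (-m) = 0) →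
      (∀ j : ℤ, ‖z.coeff j‖ ≤ 1) → ∃ y ∈ W, ∀ j : ℤ, ‖(z - y).coeff j‖ ≤ ‖π‖ :=
    fun z h1 h2 h3 => hstep D₀.card z h1 h2 h3 (fun r _ => Finset.card_filter_le _ _)
  -- iterated approximation
  have happrox : ∀ k : ℕ, ∀ x : LaurentSeries K, x ∈ V → (∀ m : ℤ, n₀ < m → x.coeff (-m) = 0) →
      (∀ j : ℤ, ‖x.coeff j‖ ≤ 1) → ∃ y ∈ W, ∀ j : ℤ, ‖(x - y).coeff j‖ ≤ ‖π‖ ^ k := by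
    intro k
    induction k with
    | zero =>
      intro x _ _ hint
      exact ⟨0, W.zero_mem, fun j => by rw [sub_zero, pow_zero]; exact hint j⟩
    | succ k IHk =>
      intro x hxV hxF hxint
      obtain ⟨y1, hy1W, hy1⟩ := IHk x hxV hxF hxint
      set z := (π⁻¹) ^ k • (x - y1) with hz
      have hzV : z ∈ V := Submodule.smul_mem _ _ (Submodule.sub_mem _ hxV (hWV hy1W))
      have hzF : ∀ m : ℤ, n₀ < m → z.coeff (-m) = 0 := by
        intro m hm
        rw [hz, HahnSeries.coeff_smul, HahnSeries.coeff_sub, hxF m hm, hWF hy1W m hm, sub_zero, smul_zero]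
      have hzint : ∀ j : ℤ, ‖z.coeff j‖ ≤ 1 := by
        intro j
        rw [hz, HahnSeries.coeff_smul, smul_eq_mul, norm_mul, norm_pow, norm_inv]
        calc ‖π‖⁻¹ ^ k * ‖(x - y1).coeff j‖ ≤ ‖π‖⁻¹ ^ k * ‖π‖ ^ k :=
              mul_le_mul_of_nonneg_left (hy1 j) (by positivity)
        _ = 1 := by
              rw [← mul_pow, inv_mul_cancel₀ (ne_of_gt hπ0), one_pow]
      obtain ⟨y2, hy2W, hy2⟩ := hstep' z hzV hzF hzint
      refine ⟨y1 + π ^ k • y2, Submodule.add_mem W hy1W (Submodule.smul_mem W _ hy2W), fun j => ?_⟩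
      have heq : x - (y1 + π ^ k • y2) = π ^ k • (z - y2) := by
        rw [hz, smul_sub, smul_smul, ← mul_pow, mul_inv_cancel₀ hπne, one_pow, one_smul]
        ring
      rw [heq, HahnSeries.coeff_smul, smul_eq_mul, norm_mul, norm_pow, pow_succ]
      exact mul_le_mul_of_nonneg_left (hy2 j) (by positivity)
  -- closure: every integral element of V of degree ≤ n₀ is in W
  have hclose : ∀ x : LaurentSeries K, x ∈ V → (∀ m : ℤ, n₀ < m → x.coeff (-m) = 0) →
      (∀ j : ℤ, ‖x.coeff j‖ ≤ 1) → x ∈ W := by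
    intro x hxV hxF hxint
    set φ : LaurentSeries K →ₗ[K] (↥(Jfin s n₀) → K) :=
      LinearMap.pi (fun i => coeff.linearMap (-(s ↑i))) with hφ
    have hφapp : ∀ (u : LaurentSeries K) (i : ↥(Jfin s n₀)), φ u i = u.coeff (-(s ↑i)) :=
      fun u i => rfl
    have hclosed : IsClosed ((W.map φ : Submodule K (↥(Jfin s n₀) → K)) : Set (↥(Jfin s n₀) → K)) := by
      have hmapeq : W.map φ = Submodule.span K (φ '' (Set.range fun d : ↥D₀ => w ↑d)) := by
        rw [hW, Submodule.map_span]
      rw [hmapeq]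
      have : FiniteDimensional K ↥(Submodule.span K (φ '' (Set.range fun d : ↥D₀ => w ↑d))) :=
        FiniteDimensional.span_of_finite K ((Set.finite_range _).image _)
      exact Submodule.closed_of_finiteDimensional _
    have hmem : φ x ∈ closure ((W.map φ : Submodule K (↥(Jfin s n₀) → K)) : Set (↥(Jfin s n₀) → K)) := by
      rw [Metric.mem_closure_iff]
      intro ε hε
      obtain ⟨k, hk⟩ := exists_pow_lt_of_lt_one hε hπ1
      obtain ⟨y, hyW, hy⟩ := happrox k x hxV hxF hxint
      refine ⟨φ y, ⟨y, hyW, rfl⟩, ?_⟩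
      rw [dist_eq_norm, ← map_sub]
      refine lt_of_le_of_lt ?_ hk
      rw [pi_norm_le_iff_of_nonneg (by positivity)]
      intro i
      rw [hφapp]
      exact hy _
    rw [hclosed.closure_eq] at hmem
    obtain ⟨y, hyW, hyeq⟩ := hmem
    have hxy : x - y = 0 := by
      by_contra hne
      have hVm : x - y ∈ V := Submodule.sub_mem _ hxV (hWV hyW)
      have hFm : ∀ m : ℤ, n₀ < m → (x - y).coeff (-m) = 0 := by
        intro m hm
        rw [HahnSeries.coeff_sub, hxF m hm, hWF hyW m hm, sub_zero]
      obtain ⟨j, hj⟩ := deg_mem_range hsM hVm hne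
      have hjle : s j ≤ n₀ := by
        have := neg_order_le hne hFm
        omega
      have hji : j ∈ Jfin s n₀ := (mem_Jfin hs).mpr hjle
      have hco : (x - y).coeff (-(s j)) = 0 := by
        have h1 := congrFun hyeq ⟨j, hji⟩
        rw [hφapp, hφapp] at h1
        rw [HahnSeries.coeff_sub, h1, sub_self]
      have hone : (x - y).coeff ((x - y).order) ≠ 0 := (mt coeff_order_eq_zero.mp hne)
      rw [show (x - y).order = -(s j) by omega] at hone
      exact hone hco
    rw [sub_eq_zero] at hxy
    rw [hxy]
    exact hyW
  -- the basis vectors of degree ≤ n₀ are in W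
  have hvW : ∀ i : ℕ, s i ≤ n₀ → v i ∈ W := by
    intro i hi
    obtain ⟨C, hC⟩ := hbound i
    have hC0 : 0 ≤ C := le_trans (norm_nonneg _) (hC 0)
    have hπinv : 1 < ‖π‖⁻¹ := (one_lt_inv₀ hπ0).mpr hπ1
    obtain ⟨a, ha⟩ := pow_unbounded_of_one_lt C hπinv
    have hviF : ∀ m : ℤ, n₀ < m → (v i).coeff (-m) = 0 := fun m hm => hdeg i m (by omega)
    have hsc : (π ^ a) • v i ∈ W := by
      apply hclose
      · exact Submodule.smul_mem _ _ (hvV i)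
      · intro m hm
        rw [HahnSeries.coeff_smul, hviF m hm, smul_zero]
      · intro j
        rw [HahnSeries.coeff_smul, smul_eq_mul, norm_mul, norm_pow]
        calc ‖π‖ ^ a * ‖(v i).coeff j‖ ≤ ‖π‖ ^ a * C :=
              mul_le_mul_of_nonneg_left (hC j) (by positivity)
        _ ≤ ‖π‖ ^ a * (‖π‖⁻¹) ^ a := mul_le_mul_of_nonneg_left ha.le (by positivity)
        _ = 1 := by rw [← mul_pow, mul_inv_cancel₀ (ne_of_gt hπ0), one_pow]
    have := Submodule.smul_mem W ((π⁻¹) ^ a) hsc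
    rwa [smul_smul, ← mul_pow, inv_mul_cancel₀ hπne, one_pow, one_smul] at this
  -- conclusion via coordinates w.r.t. the basis of W
  set E := D₀.filter (· ≤ n) with hE
  refine ⟨E, ?_, ?_⟩
  · intro d hd
    rw [hE, Finset.mem_filter] at hd
    exact ⟨((hD₀mem d).mp hd.1).1, hd.2⟩
  · have hli : LinearIndependent K (fun d : ↥D₀ => w ↑d) := rep_linearIndependent D₀ w hw'
    set b := Module.Basis.span hli with hbb
    set T := Submodule.span K (Set.range fun i : ↥(Jfin s n) => v ↑i) with hT
    have hTW : T ≤ W := by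
      rw [hT, Submodule.span_le]
      rintro - ⟨i, rfl⟩
      exact hvW ↑i (le_trans ((mem_Jfin hs).mp i.2) hnn0)
    have hTF : T ≤ Fle K n := by
      rw [hT, Submodule.span_le]
      rintro - ⟨i, rfl⟩
      exact fun m hm => hdeg ↑i m (by have := (mem_Jfin hs).mp i.2; omega)
    set θ : ↥W →ₗ[K] (↥E → K) :=
      LinearMap.pi (fun e => (Finsupp.lapply (⟨↑e, (Finset.mem_filter.mp e.2).1⟩ : ↥D₀)) ∘ₗ
        (b.repr.toLinearMap)) with hθ
    have hker : ∀ u : ↥W, ((u : LaurentSeries K) ∈ Fle K n) → θ u = 0 → u = 0 := by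
      intro u huF hu0
      by_contra hune
      have hsum : (u : LaurentSeries K) = ∑ d : ↥D₀, b.repr u d • w ↑d := by
        have h1 : (∑ d : ↥D₀, b.repr u d • b d) = u := b.sum_repr u
        calc (u : LaurentSeries K) = ((∑ d : ↥D₀, b.repr u d • b d : ↥W) : LaurentSeries K) := by
              rw [h1]
        _ = ∑ d : ↥D₀, b.repr u d • ((b d : ↥W) : LaurentSeries K) := by
              push_cast
              rfl
        _ = ∑ d : ↥D₀, b.repr u d • w ↑d := by
              refine Finset.sum_congr rfl fun d _ => ?_
              rw [hbb, Module.Basis.span_apply]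
      set a : ℤ → K := fun d => if h : d ∈ D₀ then b.repr u ⟨d, h⟩ else 0 with haa
      have hconv : ∑ d : ↥D₀, b.repr u d • w ↑d = ∑ d ∈ D₀, a d • w d := by
        rw [Finset.univ_eq_attach, ← Finset.sum_attach D₀ (fun d => a d • w d)]
        exact Finset.sum_congr rfl fun i _ => by rw [haa]; simp [i.2]
      have hEzero : ∀ (d : ℤ) (h : d ∈ D₀), d ≤ n → b.repr u ⟨d, h⟩ = 0 := by
        intro d hdD hdn
        have h2 := congrFun hu0 ⟨d, Finset.mem_filter.mpr ⟨hdD, hdn⟩⟩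
        rw [hθ] at h2
        exact h2
      have hane : ∃ d ∈ D₀, a d ≠ 0 := by
        have hrne : b.repr u ≠ 0 := by
          intro h
          apply hune
          have := b.repr.map_eq_zero_iff.mp h
          exact this
        obtain ⟨d, hd⟩ := Finsupp.ne_iff.mp hrne
        refine ⟨↑d, d.2, ?_⟩
        rw [haa]
        simp only [d.2, dif_pos]
        simpa using hd
      obtain ⟨ds, hdsD, hads, hcoeff⟩ := rep_sum_coeff D₀ w hw' a hane
      have hdsn : n < ds := by
        by_contra h
        push_neg at h
        apply hads
        rw [haa]
        simp only [hdsD, dif_pos]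
        exact hEzero ds hdsD h
      apply hcoeff
      rw [← hconv, ← hsum]
      exact huF ds hdsn
    have hinj : Function.Injective ⇑(θ ∘ₗ Submodule.inclusion hTW) := by
      intro u1 u2 h12
      have hz : (θ ∘ₗ Submodule.inclusion hTW) (u1 - u2) = 0 := by
        rw [(θ ∘ₗ Submodule.inclusion hTW).map_sub u1 u2, h12, sub_self]
      rw [LinearMap.comp_apply] at hz
      have h1 : Submodule.inclusion hTW (u1 - u2) = 0 := by
        apply hker
        · have : ((Submodule.inclusion hTW (u1 - u2) : ↥W) : LaurentSeries K)
              = ((u1 - u2 : ↥T) : LaurentSeries K) := rfl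
          rw [this]
          exact hTF (u1 - u2).2
        · exact hz
      have h2 : ((u1 - u2 : ↥T) : LaurentSeries K) = 0 := by
        have heq : ((Submodule.inclusion hTW (u1 - u2) : ↥W) : LaurentSeries K)
            = ((u1 - u2 : ↥T) : LaurentSeries K) := rfl
        rw [← heq, h1]
        rfl
      have h3 : (u1 - u2 : ↥T) = 0 := Submodule.coe_eq_zero.mp h2
      exact eq_of_sub_eq_zero h3
    have hfinE : Module.Finite K (↥E → K) := by infer_instance
    calc (Jfin s n).card = Fintype.card ↥(Jfin s n) := (Fintype.card_coe _).symm
    _ = Module.finrank K ↥T := (finrank_span_eq_card (v_linearIndependent hs hmonic hdeg)).symm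
    _ ≤ Module.finrank K (↥E → K) := LinearMap.finrank_le_finrank_of_injective hinj
    _ = Fintype.card ↥E := Module.finrank_pi K
    _ = E.card := Fintype.card_coe _

end Main4
end Stmt8
namespace Stmt8

open Classical in
lemma maya_index_eq (M' : Set ℤ) (h : IsMaya M') {n : ℤ} (hn : 0 ≤ n)
    (hsub : Set.Ioi n ⊆ M') (hfin : (M' ∩ Set.Iic n).Finite) :
    mayaIndex M' h = (hfin.toFinset.card : ℤ) - n := by
  classical
  set A := h.1.toFinset with hA
  set Bf := h.2.toFinset with hB
  set C := hfin.toFinset with hC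
  set G := (Finset.Ioc (0:ℤ) n).filter (· ∈ M') with hG
  have hCeq : C = A ∪ G := by
    ext d
    simp only [hC, hA, hG, Set.Finite.mem_toFinset, Finset.mem_union, Finset.mem_filter,
      Finset.mem_Ioc, Set.mem_inter_iff, Set.mem_Iic]
    constructor
    · rintro ⟨hdM, hdn⟩
      by_cases hd0 : d ≤ 0
      · exact Or.inl ⟨hdM, hd0⟩
      · exact Or.inr ⟨⟨by omega, hdn⟩, hdM⟩
    · rintro (⟨hdM, hd0⟩ | ⟨⟨h1, h2⟩, hdM⟩)
      · exact ⟨hdM, by omega⟩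
      · exact ⟨hdM, h2⟩
  have hdisj : Disjoint A G := by
    rw [Finset.disjoint_left]
    intro d hdA hdG
    simp only [hA, Set.Finite.mem_toFinset, Set.mem_inter_iff, Set.mem_Iic] at hdA
    simp only [hG, Finset.mem_filter, Finset.mem_Ioc] at hdG
    omega
  have hcard1 : C.card = A.card + G.card := by
    rw [hCeq, Finset.card_union_of_disjoint hdisj]
  have hBeq : Bf = (Finset.Ioc (0:ℤ) n).filter (· ∉ M') := by
    ext d
    simp only [hB, Set.Finite.mem_toFinset, Set.mem_diff, Set.mem_Ioi, Finset.mem_filter,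
      Finset.mem_Ioc]
    constructor
    · rintro ⟨hd0, hdM⟩
      refine ⟨⟨hd0, ?_⟩, hdM⟩
      by_contra hdn
      exact hdM (hsub (by simp only [Set.mem_Ioi]; omega))
    · rintro ⟨⟨h1, _⟩, h2⟩
      exact ⟨h1, h2⟩
  have hcard2 : G.card + Bf.card = (Finset.Ioc (0:ℤ) n).card := by
    rw [hBeq, hG]
    exact Finset.card_filter_add_card_filter_not _
  have hIoc : ((Finset.Ioc (0:ℤ) n).card : ℤ) = n := by
    rw [Int.card_Ioc]
    omega
  rw [mayaIndex]
  have : (A.card : ℤ) = (C.card : ℤ) - (G.card : ℤ) := by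
    rw [hcard1]; push_cast; ring
  rw [← hA, ← hB, this]
  have : (Bf.card : ℤ) = n - (G.card : ℤ) := by
    have := hcard2
    have h2 : ((G.card + Bf.card : ℕ) : ℤ) = n := by rw [this, hIoc]
    push_cast at h2
    omega
  rw [this]
  ring

end Stmt8

/-- Let `V` be a bounded *integral* element of `Gr^alg(K)`
with standard basis `v` (monic of degree `s i`, triangular), i.e.
`‖v i‖ ≤ 1` for all sufficiently large `i`.  Then `M(V^red)` is a Maya
diagram with the same index as `M(V)`, and `κ(V) ≤ κ(V^red)` componentwise:
for an increasing enumeration `sbar` of `M(V^red)` one has `sbar i ≤ s i`,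
and hence `(i + 1 − idx − s i) ≤ (i + 1 − idx − sbar i)` for each `i`, where
`idx` is the common index. -/
theorem integral_reduction_maya_kappa
    (K : Type*) [NontriviallyNormedField K] [IsUltrametricDist K] [CompleteSpace K]
    (hdisc : ∃ π : K, 0 < ‖π‖ ∧ ‖π‖ < 1 ∧ ∀ x : K, x ≠ 0 → ∃ n : ℤ, ‖x‖ = ‖π‖ ^ n)
    (V : Submodule K (LaurentSeries K))
    (hMaya : IsMaya (degSet V))
    (s : ℕ → ℤ) (hs : StrictMono s) (hsM : Set.range s = degSet V)
    (v : ℕ → LaurentSeries K)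
    (hvV : ∀ i, v i ∈ V)
    (hmonic : ∀ i, (v i).coeff (-(s i)) = 1)
    (hdeg : ∀ i, ∀ m : ℤ, s i < m → (v i).coeff (-m) = 0)
    (htri : ∀ i j, j < i → (v i).coeff (-(s j)) = 0)
    (hbound : ∀ i, ∃ C : ℝ, ∀ m : ℤ, ‖(v i).coeff m‖ ≤ C)
    (hint : ∃ N : ℕ, ∀ i, N ≤ i → ∀ m : ℤ, ‖(v i).coeff m‖ ≤ 1) :
    ∃ hMred : IsMaya (degSetRed (Vred V)),
      mayaIndex (degSetRed (Vred V)) hMred = mayaIndex (degSet V) hMaya ∧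
      ∀ sbar : ℕ → ℤ, StrictMono sbar → Set.range sbar = degSetRed (Vred V) →
        (∀ i : ℕ, sbar i ≤ s i) ∧
        ∀ i : ℕ,
          ((i : ℤ) + 1 - mayaIndex (degSet V) hMaya - s i).toNat ≤
            ((i : ℤ) + 1 - mayaIndex (degSet V) hMaya - sbar i).toNat := by
  classical
  obtain ⟨π, hπ0, hπ1, hval⟩ := hdisc
  obtain ⟨N, hN⟩ := hint
  set Mb := degSetRed (Vred V) with hMb
  have hfinR : ∀ n : ℤ, s N ≤ n → (Mb ∩ Set.Iic n).Finite :=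
    fun n hn => Stmt8.red_inter_finite hs hsM hvV hmonic hdeg hN hn
  have hcount : ∀ (n : ℤ) (hn : s N ≤ n),
      ((hfinR n hn).toFinset.card) = (Stmt8.Jfin s n).card := by
    intro n hn
    apply le_antisymm
    · apply Stmt8.card_le_of_subset hs hsM hvV hmonic hdeg hN hn
      intro d hd
      rw [Set.Finite.mem_toFinset] at hd
      exact ⟨hd.1, hd.2⟩
    · obtain ⟨E, hE1, hE2⟩ := Stmt8.lower_bound hs hsM hvV hmonic hdeg hbound hN
        hπ0 hπ1 hval hn (le_refl n)
      refine le_trans hE2 (Finset.card_le_card ?_)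
      intro d hd
      rw [Set.Finite.mem_toFinset]
      exact ⟨(hE1 d hd).1, (hE1 d hd).2⟩
  have hfinAll : ∀ n : ℤ, (Mb ∩ Set.Iic n).Finite := by
    intro n
    apply Set.Finite.subset (hfinR (max n (s N)) (le_max_right _ _))
    intro d hd
    exact ⟨hd.1, Set.mem_Iic.mpr (le_trans (Set.mem_Iic.mp hd.2) (le_max_left _ _))⟩
  have hlowAll : ∀ n : ℤ, (Stmt8.Jfin s n).card ≤ (hfinAll n).toFinset.card := by
    intro n
    obtain ⟨E, hE1, hE2⟩ := Stmt8.lower_bound hs hsM hvV hmonic hdeg hbound hN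
      hπ0 hπ1 hval (n := n) (n₀ := max n (s N)) (le_max_right _ _) (le_max_left _ _)
    refine le_trans hE2 (Finset.card_le_card ?_)
    intro d hd
    rw [Set.Finite.mem_toFinset]
    exact ⟨(hE1 d hd).1, (hE1 d hd).2⟩
  have hMset : ∀ n : ℤ, degSet V ∩ Set.Iic n = ↑((Stmt8.Jfin s n).image s) := by
    intro n
    ext d
    simp only [Finset.coe_image, Set.mem_image, Finset.mem_coe, Set.mem_inter_iff,
      Set.mem_Iic, ← hsM]
    constructor
    · rintro ⟨⟨i, rfl⟩, hdn⟩
      exact ⟨i, (Stmt8.mem_Jfin hs).mpr hdn, rfl⟩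
    · rintro ⟨i, hi, rfl⟩
      exact ⟨⟨i, rfl⟩, (Stmt8.mem_Jfin hs).mp hi⟩
  have hMfin : ∀ n : ℤ, (degSet V ∩ Set.Iic n).Finite := fun n => by
    rw [hMset n]; exact Finset.finite_toSet _
  have hMcard : ∀ n : ℤ, (hMfin n).toFinset.card = (Stmt8.Jfin s n).card := by
    intro n
    have h1 : (hMfin n).toFinset = (Stmt8.Jfin s n).image s := by
      apply Finset.coe_injective
      rw [Set.Finite.coe_toFinset, hMset n]
    rw [h1, Finset.card_image_of_injective _ hs.injective]
  have hmem_red : ∀ i : ℕ, N ≤ i → s i ∈ Mb :=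
    fun i hi => Stmt8.s_mem_red hvV hmonic hdeg hN hi
  have hM1 : (Mb ∩ Set.Iic 0).Finite := hfinAll 0
  have hM2 : (Set.Ioi 0 \ Mb).Finite := by
    apply Set.Finite.subset (Set.Finite.union hMaya.2 ((Set.finite_Iio N).image s))
    intro m hm
    obtain ⟨hm0, hmM⟩ := hm
    by_cases hmMset : m ∈ degSet V
    · right
      rw [← hsM] at hmMset
      obtain ⟨i, rfl⟩ := hmMset
      refine ⟨i, ?_, rfl⟩
      simp only [Set.mem_Iio]
      by_contra h
      push_neg at h
      exact hmM (hmem_red i h)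
    · left; exact ⟨hm0, hmMset⟩
  refine ⟨⟨hM1, hM2⟩, ?_, ?_⟩
  · obtain ⟨B, hB⟩ := hMaya.2.bddAbove
    set n := max (max (s N) 0) B with hn
    have hn0 : (0:ℤ) ≤ n := le_trans (le_max_right _ _) (le_max_left _ _)
    have hnsN : s N ≤ n := le_trans (le_max_left _ _) (le_max_left _ _)
    have hsubM : Set.Ioi n ⊆ degSet V := by
      intro m hm
      simp only [Set.mem_Ioi] at hm
      by_contra h
      have hmem : m ∈ Set.Ioi 0 \ degSet V := ⟨by simp only [Set.mem_Ioi]; omega, h⟩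
      have := hB hmem
      omega
    have hsubMb : Set.Ioi n ⊆ Mb := by
      intro m hm
      simp only [Set.mem_Ioi] at hm
      have hmM : m ∈ degSet V := hsubM (by simp only [Set.mem_Ioi]; omega)
      rw [← hsM] at hmM
      obtain ⟨i, rfl⟩ := hmM
      apply hmem_red
      by_contra h
      push_neg at h
      have : s i ≤ s N := hs.monotone (le_of_lt h)
      omega
    rw [Stmt8.maya_index_eq Mb ⟨hM1, hM2⟩ hn0 hsubMb (hfinAll n),
        Stmt8.maya_index_eq (degSet V) hMaya hn0 hsubM (hMfin n)]
    rw [hMcard n]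
    have heq : (hfinAll n).toFinset.card = (Stmt8.Jfin s n).card := hcount n hnsN
    rw [heq]
  · intro sbar hsbar hrange
    have hle : ∀ i : ℕ, sbar i ≤ s i := by
      intro i
      by_contra hcon
      push_neg at hcon
      have h1 : i + 1 ≤ (Stmt8.Jfin s (s i)).card := by
        have hsub : Finset.range (i+1) ⊆ Stmt8.Jfin s (s i) := by
          intro j hj
          rw [Finset.mem_range] at hj
          exact (Stmt8.mem_Jfin hs).mpr (hs.monotone (by omega))
        calc i + 1 = (Finset.range (i+1)).card := (Finset.card_range _).symm
        _ ≤ _ := Finset.card_le_card hsub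
      have h2 := hlowAll (s i)
      have h3 : (hfinAll (s i)).toFinset ⊆ (Finset.range i).image sbar := by
        intro d hd
        rw [Set.Finite.mem_toFinset] at hd
        obtain ⟨hdM, hdle⟩ := hd
        rw [← hrange] at hdM
        obtain ⟨j, rfl⟩ := hdM
        have hlt : sbar j < sbar i := by
          simp only [Set.mem_Iic] at hdle
          omega
        have hji : j < i := hsbar.lt_iff_lt.mp hlt
        exact Finset.mem_image.mpr ⟨j, Finset.mem_range.mpr hji, rfl⟩
      have h4 : (hfinAll (s i)).toFinset.card ≤ i :=
        le_trans (Finset.card_le_card h3)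
          (le_trans Finset.card_image_le (le_of_eq (Finset.card_range _)))
      omega
    refine ⟨hle, fun i => Int.toNat_le_toNat (by have := hle i; omega)⟩
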